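/- Let (c_2, c_4) ∈ ℂ² ∖ {(0,0)}. The SL(2,ℤ)-orbit S := {(a·c_2 + b·c_4, c·c_2 + d·c_4) : [[a,b],[c,d]] ∈ SL(2,ℤ)} has an accumulation point in ℂ² if and only if Im(c_2·conj(c_4)) = 0, c_4 ≠ 0 and c_2/c_4 is irrational. In particular, if Im(c_2·conj(c_4)) ≠ 0 then S is a discrete subset of ℂ² with no accumulation point. -/

import Mathlib

open Complex Filter

/-- The `SL(2,ℤ)`-orbit of `(c₂, c₄) ∈ ℂ²`. -/
def SL2ZOrbit (c₂ c₄ : ℂ) : Set (ℂ × ℂ) :=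
  {y | ∃ A : Matrix (Fin 2) (Fin 2) ℤ, A.det = 1 ∧
    y = ((A 0 0 : ℂ) * c₂ + (A 0 1 : ℂ) * c₄, (A 1 0 : ℂ) * c₂ + (A 1 1 : ℂ) * c₄)}

/-- If nonzero integer combinations of `c₂, c₄` are uniformly bounded below in norm,
the orbit has no accumulation point. -/
lemma SL2ZOrbit.no_acc_of_sep (c₂ c₄ : ℂ) (ε : ℝ) (hε : 0 < ε)
    (h : ∀ a b : ℤ, (a : ℂ) * c₂ + (b : ℂ) * c₄ ≠ 0 → ε ≤ ‖(a : ℂ) * c₂ + (b : ℂ) * c₄‖) :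
    ¬ ∃ p : ℂ × ℂ, AccPt p (Filter.principal (SL2ZOrbit c₂ c₄)) := by
  rintro ⟨p, hp⟩
  rw [accPt_iff_nhds] at hp
  obtain ⟨x, ⟨hx1, hxS⟩, hxp⟩ :=
    hp (Metric.ball p (ε / 2)) (Metric.ball_mem_nhds _ (by positivity))
  obtain ⟨y, ⟨hy1, hyS⟩, hyp⟩ :=
    hp (Metric.ball p (min (ε / 2) (dist x p)))
      (Metric.ball_mem_nhds _ (lt_min (by positivity) (dist_pos.mpr hxp)))
  have hyx : y ≠ x := by
    intro e
    have := (Metric.mem_ball.mp hy1).trans_le (min_le_right _ _)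
    rw [e] at this
    exact absurd rfl (ne_of_lt this)
  have hd : dist x y < ε := by
    have h1 : dist x p < ε / 2 := Metric.mem_ball.mp hx1
    have h2 : dist y p < ε / 2 := (Metric.mem_ball.mp hy1).trans_le (min_le_left _ _)
    calc dist x y ≤ dist x p + dist p y := dist_triangle _ _ _
      _ < ε / 2 + ε / 2 := by rw [dist_comm p y]; exact add_lt_add h1 h2
      _ = ε := by ring
  obtain ⟨A, hA, hxe⟩ := hxS
  obtain ⟨B, hB, hye⟩ := hyS
  have key : ε ≤ dist x y := by
    have hne : x.1 ≠ y.1 ∨ x.2 ≠ y.2 := by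
      by_contra hcon
      push_neg at hcon
      exact hyx (Prod.ext hcon.1 hcon.2).symm
    rcases hne with hne | hne
    · have e1 : x.1 - y.1 = ((A 0 0 - B 0 0 : ℤ) : ℂ) * c₂ + ((A 0 1 - B 0 1 : ℤ) : ℂ) * c₄ := by
        rw [hxe, hye]; push_cast; ring
      have := h _ _ (e1 ▸ sub_ne_zero.mpr hne)
      calc ε ≤ ‖x.1 - y.1‖ := e1 ▸ this
        _ = dist x.1 y.1 := (dist_eq_norm _ _).symm
        _ ≤ dist x y := le_max_left _ _
    · have e1 : x.2 - y.2 = ((A 1 0 - B 1 0 : ℤ) : ℂ) * c₂ + ((A 1 1 - B 1 1 : ℤ) : ℂ) * c₄ := by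
        rw [hxe, hye]; push_cast; ring
      have := h _ _ (e1 ▸ sub_ne_zero.mpr hne)
      calc ε ≤ ‖x.2 - y.2‖ := e1 ▸ this
        _ = dist x.2 y.2 := (dist_eq_norm _ _).symm
        _ ≤ dist x y := le_max_right _ _
  exact absurd hd (not_lt.mpr key)

/-- For irrational `α` and `ε > 0`, there is a determinant-one integer matrix
`[[a,b],[c,d]]` with `|aα+b| < ε` and `0 < |cα+d| < ε`. -/
lemma exists_small_unimodular (α : ℝ) (hirr : Irrational α) (ε : ℝ) (hε : 0 < ε) :
    ∃ a b c d : ℤ, a * d - b * c = 1 ∧ |(a : ℝ) * α + b| < ε ∧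
      (c : ℝ) * α + d ≠ 0 ∧ |(c : ℝ) * α + d| < ε := by
  set S : AddSubgroup ℝ := AddSubgroup.closure {α, 1} with hS
  have hαS : α ∈ S := AddSubgroup.subset_closure (by simp)
  have h1S : (1 : ℝ) ∈ S := AddSubgroup.subset_closure (by simp)
  rcases AddSubgroup.dense_or_cyclic S with hd | ⟨g, hg⟩
  swap
  · -- cyclic case: α would be rational, contradiction
    exfalso
    rw [hg, AddSubgroup.mem_closure_singleton] at hαS h1S
    obtain ⟨m, hm⟩ := hαS
    obtain ⟨n, hn⟩ := h1S
    have hn0 : (n : ℝ) ≠ 0 := by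
      intro h
      rw [zsmul_eq_mul, h, zero_mul] at hn
      exact one_ne_zero hn.symm
    refine hirr ⟨(m : ℚ) / (n : ℚ), ?_⟩
    rw [zsmul_eq_mul] at hm hn
    push_cast
    rw [div_eq_iff hn0, ← hm, mul_assoc, mul_comm g ((n:ℤ):ℝ), hn, mul_one]
  · -- dense case
    obtain ⟨x, hxS, hx0, hx1⟩ : ∃ x ∈ S, 0 < x ∧ x < min ε 1 := by
      obtain ⟨x, hxS, hxm⟩ := hd.exists_mem_open isOpen_Ioo
        (Set.nonempty_Ioo.mpr (by positivity : (0:ℝ) < min ε 1))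
      exact ⟨x, hxS, hxm.1, hxm.2⟩
    obtain ⟨c, d, hcd⟩ : ∃ c d : ℤ, (c : ℝ) * α + d = x := by
      rw [hS, AddSubgroup.mem_closure_pair] at hxS
      obtain ⟨m, n, hmn⟩ := hxS
      exact ⟨m, n, by rw [← hmn]; push_cast [zsmul_eq_mul]; ring⟩
    have hc0 : c ≠ 0 := by
      intro h
      rw [h] at hcd
      simp only [Int.cast_zero, zero_mul, zero_add] at hcd
      have hd0 : 0 < d := by exact_mod_cast hcd ▸ hx0
      have : (1 : ℝ) ≤ d := by exact_mod_cast hd0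
      linarith [hx1.trans_le (min_le_right ε 1), hcd ▸ this]
    have hgcd : 0 < Int.gcd c d := Int.gcd_pos_of_ne_zero_left d hc0
    obtain ⟨g, c₀, d₀, hg0, hcop, hc, hd'⟩ := Int.exists_gcd_one' hgcd
    set δ : ℝ := (c₀ : ℝ) * α + d₀ with hδ
    have hgδ : (g : ℝ) * δ = x := by
      rw [← hcd, hc, hd', hδ]; push_cast; ring
    have hg1 : (1 : ℝ) ≤ g := by exact_mod_cast hg0
    have hδ0 : 0 < δ := by
      by_contra hcon
      push_neg at hcon
      nlinarith
    have hδε : δ < ε := by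
      have : δ ≤ x := by nlinarith
      exact this.trans_lt (hx1.trans_le (min_le_left _ _))
    obtain ⟨u, v, huv⟩ := (Int.isCoprime_iff_gcd_eq_one.mpr hcop)
    set β : ℝ := (v : ℝ) * α + (-u : ℤ) with hβ
    set t : ℤ := ⌊β / δ⌋ with ht
    refine ⟨v - t * c₀, -u - t * d₀, c₀, d₀, by linarith [huv], ?_, ne_of_gt hδ0, ?_⟩
    · have e1 : ((v - t * c₀ : ℤ) : ℝ) * α + ((-u - t * d₀ : ℤ) : ℝ) = β - t * δ := by
        rw [hβ, hδ]; push_cast; ring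
      have e2 : β - t * δ = δ * Int.fract (β / δ) := by
        rw [Int.fract, ht]
        field_simp
      rw [e1, e2, _root_.abs_of_nonneg (mul_nonneg hδ0.le (Int.fract_nonneg (β / δ)))]
      calc δ * Int.fract (β / δ) < δ * 1 :=
            (mul_lt_mul_iff_right₀ hδ0).mpr (Int.fract_lt_one _)
        _ = δ := mul_one δ
        _ < ε := hδε
    · rw [← hδ, _root_.abs_of_pos hδ0]; exact hδε

/-- If `c₂ = α c₄` with `α` real irrational, the orbit accumulates at the origin. -/
lemma SL2ZOrbit.acc_of_irrational (c₂ c₄ : ℂ) (hc4 : c₄ ≠ 0) (α : ℝ) (hα : c₂ = (α : ℂ) * c₄)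
    (hirr : Irrational α) :
    AccPt ((0, 0) : ℂ × ℂ) (Filter.principal (SL2ZOrbit c₂ c₄)) := by
  rw [accPt_iff_nhds]
  intro U hU
  obtain ⟨ε', hε', hball⟩ := Metric.mem_nhds_iff.mp hU
  have hc4n : (0 : ℝ) < ‖c₄‖ := norm_pos_iff.mpr hc4
  obtain ⟨a, b, c, d, hdet, hab, hcd0, hcd⟩ :=
    exists_small_unimodular α hirr (ε' / ‖c₄‖) (by positivity)
  set y : ℂ × ℂ := ((a : ℂ) * c₂ + (b : ℂ) * c₄, (c : ℂ) * c₂ + (d : ℂ) * c₄) with hy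
  have e1 : y.1 = (((a : ℝ) * α + b : ℝ) : ℂ) * c₄ := by rw [hy, hα]; push_cast; ring
  have e2 : y.2 = (((c : ℝ) * α + d : ℝ) : ℂ) * c₄ := by rw [hy, hα]; push_cast; ring
  refine ⟨y, ⟨?_, ?_⟩, ?_⟩
  · -- y ∈ U
    apply hball
    rw [Metric.mem_ball, Prod.dist_eq]
    have n1 : dist y.1 (0 : ℂ) < ε' := by
      rw [dist_zero_right, e1, norm_mul, Complex.norm_real, Real.norm_eq_abs]
      calc |(a : ℝ) * α + b| * ‖c₄‖ < (ε' / ‖c₄‖) * ‖c₄‖ := by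
            exact mul_lt_mul_of_pos_right hab hc4n
        _ = ε' := div_mul_cancel₀ ε' (ne_of_gt hc4n)
    have n2 : dist y.2 (0 : ℂ) < ε' := by
      rw [dist_zero_right, e2, norm_mul, Complex.norm_real, Real.norm_eq_abs]
      calc |(c : ℝ) * α + d| * ‖c₄‖ < (ε' / ‖c₄‖) * ‖c₄‖ := by
            exact mul_lt_mul_of_pos_right hcd hc4n
        _ = ε' := div_mul_cancel₀ ε' (ne_of_gt hc4n)
    exact max_lt n1 n2
  · -- y ∈ orbit
    refine ⟨!![a, b; c, d], by rw [Matrix.det_fin_two_of]; exact hdet, ?_⟩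
    rw [hy]
    simp [Matrix.cons_val_zero, Matrix.cons_val_one, Matrix.head_cons]
  · -- y ≠ (0,0)
    intro h
    have : y.2 = 0 := by rw [h]
    rw [e2] at this
    rcases mul_eq_zero.mp this with h' | h'
    · exact hcd0 (by exact_mod_cast h')
    · exact hc4 h'

/-- for `(c₂,c₄) ≠ (0,0)`, the `SL(2,ℤ)`-orbit of `(c₂,c₄)` has an
accumulation point in `ℂ²` iff `Im(c₂ c̄₄) = 0`, `c₄ ≠ 0` and `c₂/c₄` is irrational;
in particular if `Im(c₂ c̄₄) ≠ 0` the orbit has no accumulation point. -/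
theorem SL2ZOrbit_accumulation (c₂ c₄ : ℂ) (hc : (c₂, c₄) ≠ (0, 0)) :
    ((∃ p : ℂ × ℂ, AccPt p (Filter.principal (SL2ZOrbit c₂ c₄))) ↔
      ((c₂ * (starRingEnd ℂ) c₄).im = 0 ∧ c₄ ≠ 0 ∧ ¬ ∃ q : ℚ, c₂ / c₄ = (q : ℂ))) ∧
    ((c₂ * (starRingEnd ℂ) c₄).im ≠ 0 →
      ¬ ∃ p : ℂ × ℂ, AccPt p (Filter.principal (SL2ZOrbit c₂ c₄))) := by
  -- Case 1: Im ≠ 0 gives a uniform separation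
  have noAccIm : (c₂ * (starRingEnd ℂ) c₄).im ≠ 0 →
      ¬ ∃ p : ℂ × ℂ, AccPt p (Filter.principal (SL2ZOrbit c₂ c₄)) := by
    intro hI
    have hc2 : c₂ ≠ 0 := by rintro rfl; simp at hI
    have hc4 : c₄ ≠ 0 := by rintro rfl; simp at hI
    set I : ℝ := (c₂ * (starRingEnd ℂ) c₄).im with hIdef
    set M : ℝ := max ‖c₂‖ ‖c₄‖ with hM
    have hM0 : 0 < M := lt_max_of_lt_left (norm_pos_iff.mpr hc2)
    have hIpos : 0 < |I| := abs_pos.mpr hI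
    apply SL2ZOrbit.no_acc_of_sep c₂ c₄ (|I| / M) (by positivity)
    intro a b hx
    set x : ℂ := (a : ℂ) * c₂ + (b : ℂ) * c₄ with hxdef
    have bnd : ∀ z : ℂ, ‖x * (starRingEnd ℂ) z‖ ≤ ‖x‖ * ‖z‖ := by
      intro z
      rw [norm_mul, RCLike.norm_conj]
    have key : |I| ≤ ‖x‖ * M := by
      by_cases ha : a = 0
      · have hb : b ≠ 0 := by
          intro hb
          exact hx (by rw [hxdef, ha, hb]; simp)
        have e : (x * (starRingEnd ℂ) c₂).im = -(b : ℝ) * I := by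
          have : x * (starRingEnd ℂ) c₂ =
              (a : ℂ) * (c₂ * (starRingEnd ℂ) c₂) + (b : ℂ) * (c₄ * (starRingEnd ℂ) c₂) := by
            rw [hxdef]; ring
          rw [this]
          have h2 : c₄ * (starRingEnd ℂ) c₂ = (starRingEnd ℂ) (c₂ * (starRingEnd ℂ) c₄) := by
            rw [map_mul, Complex.conj_conj]; ring
          rw [h2]
          simp only [Complex.add_im, Complex.mul_im, Complex.mul_conj, hIdef,
            Complex.intCast_re, Complex.intCast_im, Complex.conj_im, Complex.conj_re,
            Complex.ofReal_im, Complex.ofReal_re, Complex.mul_re]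
          ring
        have h1 : |(-(b : ℝ)) * I| ≤ ‖x‖ * ‖c₂‖ := by
          rw [← e]
          calc |(x * (starRingEnd ℂ) c₂).im| ≤ ‖x * (starRingEnd ℂ) c₂‖ :=
                Complex.abs_im_le_norm _
            _ = ‖x * (starRingEnd ℂ) c₂‖ := rfl
            _ ≤ ‖x‖ * ‖c₂‖ := bnd c₂
        have hb1 : (1 : ℝ) ≤ |(-(b : ℝ))| := by
          rw [abs_neg]
          exact_mod_cast Int.one_le_abs hb
        calc |I| = 1 * |I| := (one_mul _).symm
          _ ≤ |(-(b : ℝ))| * |I| := mul_le_mul_of_nonneg_right hb1 (abs_nonneg _)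
          _ = |(-(b : ℝ)) * I| := (abs_mul _ _).symm
          _ ≤ ‖x‖ * ‖c₂‖ := h1
          _ ≤ ‖x‖ * M := mul_le_mul_of_nonneg_left (le_max_left _ _) (norm_nonneg _)
      · have e : (x * (starRingEnd ℂ) c₄).im = (a : ℝ) * I := by
          have : x * (starRingEnd ℂ) c₄ =
              (a : ℂ) * (c₂ * (starRingEnd ℂ) c₄) + (b : ℂ) * (c₄ * (starRingEnd ℂ) c₄) := by
            rw [hxdef]; ring
          rw [this]
          simp [Complex.add_im, Complex.mul_im, Complex.mul_conj, hIdef]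
        have h1 : |(a : ℝ) * I| ≤ ‖x‖ * ‖c₄‖ := by
          rw [← e]
          calc |(x * (starRingEnd ℂ) c₄).im| ≤ ‖x * (starRingEnd ℂ) c₄‖ :=
                Complex.abs_im_le_norm _
            _ = ‖x * (starRingEnd ℂ) c₄‖ := rfl
            _ ≤ ‖x‖ * ‖c₄‖ := bnd c₄
        have ha1 : (1 : ℝ) ≤ |(a : ℝ)| := by exact_mod_cast Int.one_le_abs ha
        calc |I| = 1 * |I| := (one_mul _).symm
          _ ≤ |(a : ℝ)| * |I| := mul_le_mul_of_nonneg_right ha1 (abs_nonneg _)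
          _ = |(a : ℝ) * I| := (abs_mul _ _).symm
          _ ≤ ‖x‖ * ‖c₄‖ := h1
          _ ≤ ‖x‖ * M := mul_le_mul_of_nonneg_left (le_max_right _ _) (norm_nonneg _)
    rw [div_le_iff₀ hM0]
    exact key
  -- Case 2: c₄ = 0
  have noAcc0 : c₄ = 0 →
      ¬ ∃ p : ℂ × ℂ, AccPt p (Filter.principal (SL2ZOrbit c₂ c₄)) := by
    intro h4
    have hc2 : c₂ ≠ 0 := by
      intro h2
      exact hc (by rw [h2, h4])
    apply SL2ZOrbit.no_acc_of_sep c₂ c₄ ‖c₂‖ (norm_pos_iff.mpr hc2)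
    intro a b hx
    rw [h4, mul_zero, add_zero] at hx ⊢
    have ha : a ≠ 0 := by
      intro h; rw [h] at hx; simp at hx
    rw [norm_mul]
    have : (1:ℝ) ≤ ‖(a : ℂ)‖ := by
      rw [Complex.norm_intCast]
      exact_mod_cast Int.one_le_abs ha
    nlinarith [norm_nonneg c₂]
  -- Case 3: c₄ ≠ 0 and c₂/c₄ rational
  have noAccRat : c₄ ≠ 0 → ∀ q : ℚ, c₂ / c₄ = (q : ℂ) →
      ¬ ∃ p : ℂ × ℂ, AccPt p (Filter.principal (SL2ZOrbit c₂ c₄)) := by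
    intro hc4 q hq
    have hc2 : c₂ = (q : ℂ) * c₄ := by
      field_simp at hq
      rw [hq]; ring
    have hden : (0:ℝ) < (q.den : ℝ) := by exact_mod_cast q.pos
    have hc4n : (0:ℝ) < ‖c₄‖ := norm_pos_iff.mpr hc4
    apply SL2ZOrbit.no_acc_of_sep c₂ c₄ (‖c₄‖ / q.den) (by positivity)
    intro a b hx
    set r : ℚ := a * q + b with hr
    have ex : (a : ℂ) * c₂ + (b : ℂ) * c₄ = (r : ℂ) * c₄ := by
      rw [hc2, hr]; push_cast; ring
    have hr0 : r ≠ 0 := by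
      intro h
      rw [ex, h] at hx
      simp at hx
    -- |r| ≥ 1/q.den
    have hrden : (1:ℚ) ≤ |r| * q.den := by
      have e : r * q.den = ((a * q.num + b * q.den : ℤ) : ℚ) := by
        rw [hr]
        push_cast
        rw [add_mul, mul_assoc, Rat.mul_den_eq_num]
      have hn0 : (a * q.num + b * q.den : ℤ) ≠ 0 := by
        intro h
        apply hr0
        have := e
        rw [h] at this
        push_cast at this
        rcases mul_eq_zero.mp this with h' | h'
        · exact h'
        · exact absurd h' (by exact_mod_cast ne_of_gt q.pos)
      have : (1:ℚ) ≤ |((a * q.num + b * q.den : ℤ) : ℚ)| := by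
        exact_mod_cast Int.one_le_abs hn0
      rw [← e, abs_mul, abs_of_pos (by exact_mod_cast q.pos : (0:ℚ) < (q.den:ℚ))] at this
      exact this
    rw [ex, norm_mul]
    have hnr : ‖(r : ℂ)‖ = |(r : ℝ)| := by
      rw [← Complex.ofReal_ratCast, Complex.norm_real, Real.norm_eq_abs]
    rw [hnr, div_le_iff₀ hden]
    have hcast : (1:ℝ) ≤ |(r : ℝ)| * q.den := by
      exact_mod_cast hrden
    nlinarith [abs_nonneg (r:ℝ), norm_nonneg c₄]
  constructor
  · constructor
    · intro hacc
      by_cases hI : (c₂ * (starRingEnd ℂ) c₄).im = 0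
      · by_cases hc4 : c₄ = 0
        · exact absurd hacc (noAcc0 hc4)
        · refine ⟨hI, hc4, ?_⟩
          rintro ⟨q, hq⟩
          exact noAccRat hc4 q hq hacc
      · exact absurd hacc (noAccIm hI)
    · rintro ⟨hI, hc4, hirr⟩
      -- extract real α with c₂ = α c₄
      have hns : Complex.normSq c₄ ≠ 0 := fun h => hc4 (Complex.normSq_eq_zero.mp h)
      set α : ℝ := (c₂ * (starRingEnd ℂ) c₄).re / Complex.normSq c₄ with hα
      have h1 : c₂ * (starRingEnd ℂ) c₄ = (((c₂ * (starRingEnd ℂ) c₄).re : ℝ) : ℂ) := by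
        apply Complex.ext
        · simp
        · simp [hI]
      have hc2 : c₂ = (α : ℂ) * c₄ := by
        have h2 : (Complex.normSq c₄ : ℂ) = c₄ * (starRingEnd ℂ) c₄ := (Complex.mul_conj c₄).symm
        rw [hα, Complex.ofReal_div]
        rw [div_mul_eq_mul_div, eq_div_iff (by exact_mod_cast hns)]
        rw [h2, ← h1]
        ring
      have hirr' : Irrational α := by
        rintro ⟨q, hq⟩
        apply hirr
        refine ⟨q, ?_⟩
        rw [hc2, mul_div_assoc, div_self hc4, mul_one, ← hq]
        norm_cast
      exact ⟨(0, 0), SL2ZOrbit.acc_of_irrational c₂ c₄ hc4 α hc2 hirr'⟩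
  · exact noAccIm
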